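/- Let X ⊂ H(𝔻) be a Banach space containing the constants and satisfying conditions (I) and (IV), let v be any weight, φ an analytic selfmap of 𝔻 and g ∈ H(𝔻). Then T_g^φ maps X into B_v^0 and T_g^φ: X → B_v^0 is compact if and only if T_g^φ: X → B_v^∞ is compact and g∘φ ∈ B_v^0. -/

import Mathlib

noncomputable section

open Complex MeasureTheory Metric Set Filter Topology

/-- The open unit disc in `ℂ`. -/
def uDisc : Set ℂ := Metric.ball 0 1

/-- Functions on the disc carrying the topology of uniform convergence on compact
subsets of the disc (i.e. the compact-open topology on holomorphic functions). -/
abbrev CO : Type := UniformOnFun (↥uDisc) ℂ {K : Set (↥uDisc) | IsCompact K}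

/-- The canonical map sending a function on `ℂ` to its restriction to the disc,
viewed in the compact-open topology. -/
def toCO (f : ℂ → ℂ) : CO :=
  UniformOnFun.ofFun {K : Set (↥uDisc) | IsCompact K} (fun z => f z.1)

/-- The compact-open topology induced on an abstract space of analytic functions
via the inclusion `ι`. -/
def coTopOn {E : Type} (ι : E → (ℂ → ℂ)) : TopologicalSpace E :=
  TopologicalSpace.induced (fun x => toCO (ι x)) inferInstance

/-- Condition (I): the closed unit ball is compact in the compact-open topology. -/
def CondI {E : Type} [NormedAddCommGroup E] (ι : E → (ℂ → ℂ)) : Prop :=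
  IsCompact ((fun x => toCO (ι x)) '' Metric.closedBall (0 : E) 1)

/-- The norm of the evaluation functional `δ_z` on the space realized via `ι`. -/
def evalNorm {E : Type} [NormedAddCommGroup E] (ι : E → (ℂ → ℂ)) (z : ℂ) : ℝ :=
  sSup ((fun x => ‖ι x z‖) '' Metric.closedBall (0 : E) 1)

/-- Condition (II): the norms of the evaluation functionals blow up at the boundary. -/
def CondII {E : Type} [NormedAddCommGroup E] (ι : E → (ℂ → ℂ)) : Prop :=
  ∀ M : ℝ, ∃ s : ℝ, 0 ≤ s ∧ s < 1 ∧ ∀ z ∈ uDisc, s < ‖z‖ → M < evalNorm ι z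

/-- The dilation `f_r(z) = f (r z)`. -/
def dil (r : ℝ) (f : ℂ → ℂ) : ℂ → ℂ := fun z => f ((r : ℂ) * z)

/-- Condition (III): the dilation operators `T_r` act compactly on the space. -/
def CondIII {E : Type} [NormedAddCommGroup E] [NormedSpace ℂ E] (ι : E →ₗ[ℂ] (ℂ → ℂ)) : Prop :=
  ∀ r : ℝ, 0 < r → r < 1 → ∃ T : E →L[ℂ] E,
    (∀ x : E, Set.EqOn (ι (T x)) (dil r (ι x)) uDisc) ∧ IsCompactOperator (fun x : E => T x)

/-- Condition (IV): the dilation operators `T_r` are uniformly bounded on the space. -/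
def CondIV {E : Type} [NormedAddCommGroup E] [NormedSpace ℂ E] (ι : E →ₗ[ℂ] (ℂ → ℂ)) : Prop :=
  ∃ M : ℝ, ∀ r : ℝ, 0 < r → r < 1 → ∃ T : E →L[ℂ] E,
    (∀ x : E, Set.EqOn (ι (T x)) (dil r (ι x)) uDisc) ∧ ‖T‖ ≤ M

/-- Condition (V): multiplication by a bounded analytic function `u` is bounded on the
space, with norm controlled by `‖u‖_∞`. -/
def CondV {E : Type} [NormedAddCommGroup E] [NormedSpace ℂ E] (ι : E →ₗ[ℂ] (ℂ → ℂ)) : Prop :=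
  ∃ C : ℝ, 0 < C ∧ ∀ (u : ℂ → ℂ) (b : ℝ), DifferentiableOn ℂ u uDisc →
    (∀ z ∈ uDisc, ‖u z‖ ≤ b) →
    ∃ T : E →L[ℂ] E,
      (∀ x : E, Set.EqOn (ι (T x)) (fun z => u z * ι x z) uDisc) ∧ ‖T‖ ≤ C * b

/-- The set of values `v(z)|f(z)|`, `z ∈ 𝔻`. -/
def hvSet (v : ℂ → ℝ) (f : ℂ → ℂ) : Set ℝ := (fun z => v z * ‖f z‖) '' uDisc

/-- The norm of the weighted Banach space `H_v^∞`. -/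
def hvNorm (v : ℂ → ℝ) (f : ℂ → ℂ) : ℝ := sSup (hvSet v f)

/-- Membership in the weighted Banach space `H_v^∞`. -/
def memHvInf (v : ℂ → ℝ) (f : ℂ → ℂ) : Prop :=
  DifferentiableOn ℂ f uDisc ∧ BddAbove (hvSet v f)

/-- `F(z) → 0` as `|z| → 1⁻`. -/
def vanishBd (F : ℂ → ℝ) : Prop :=
  ∀ ε : ℝ, 0 < ε → ∃ s : ℝ, 0 ≤ s ∧ s < 1 ∧ ∀ z ∈ uDisc, s < ‖z‖ → F z < ε

/-- Membership in the space `H_v^0`. -/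
def memHv0 (v : ℂ → ℝ) (f : ℂ → ℂ) : Prop :=
  memHvInf v f ∧ vanishBd (fun z => v z * ‖f z‖)

/-- The set of values `v(z)|f'(z)|`, `z ∈ 𝔻`. -/
def bvSet (v : ℂ → ℝ) (f : ℂ → ℂ) : Set ℝ := (fun z => v z * ‖deriv f z‖) '' uDisc

/-- The norm of the Bloch-type space `B_v^∞`. -/
def bvNorm (v : ℂ → ℝ) (f : ℂ → ℂ) : ℝ := ‖f 0‖ + sSup (bvSet v f)

/-- Membership in the Bloch-type space `B_v^∞`. -/
def memBvInf (v : ℂ → ℝ) (f : ℂ → ℂ) : Prop :=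
  DifferentiableOn ℂ f uDisc ∧ BddAbove (bvSet v f)

/-- Membership in the little Bloch-type space `B_v^0`. -/
def memBv0 (v : ℂ → ℝ) (f : ℂ → ℂ) : Prop :=
  memBvInf v f ∧ vanishBd (fun z => v z * ‖deriv f z‖)

/-- A weight: continuous, strictly positive on `𝔻`, vanishing at the boundary. -/
def IsWeight (v : ℂ → ℝ) : Prop :=
  ContinuousOn v uDisc ∧ (∀ z ∈ uDisc, 0 < v z) ∧ vanishBd v

/-- A normal weight. -/
def IsNormalWeight (v : ℂ → ℝ) : Prop :=
  IsWeight v ∧ (∀ z ∈ uDisc, v z = v ((‖z‖ : ℝ) : ℂ)) ∧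
  (∀ r s : ℝ, 0 ≤ r → r ≤ s → s < 1 → v ((s : ℂ)) ≤ v ((r : ℂ))) ∧
  (∃ k : ℕ, 1 ≤ k ∧
    Filter.limsup (fun n : ℕ =>
        v ((((1 : ℝ) - (2 : ℝ) ^ (-(n : ℤ) - (k : ℤ)) : ℝ) : ℂ)) /
        v ((((1 : ℝ) - (2 : ℝ) ^ (-(n : ℤ)) : ℝ) : ℂ))) Filter.atTop < 1) ∧
  (∃ M : ℝ, ∀ n : ℕ,
    v ((((1 : ℝ) - (2 : ℝ) ^ (-(n : ℤ)) : ℝ) : ℂ)) /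
    v ((((1 : ℝ) - (2 : ℝ) ^ (-(n : ℤ) - 1) : ℝ) : ℂ)) ≤ M)

/-- The standard weight `v_α(z) = (1 - |z|²)^α`. -/
def stdWeight (α : ℝ) : ℂ → ℝ := fun z => (1 - ‖z‖ ^ 2) ^ α

/-- The classical Volterra operator `T_g f (w) = ∫₀^w f(ξ) g'(ξ) dξ`. -/
def volterra (g f : ℂ → ℂ) (w : ℂ) : ℂ :=
  w * ∫ t in (0:ℝ)..1, f ((t : ℂ) * w) * deriv g ((t : ℂ) * w)

/-- The generalized Volterra operator `T_g^φ f (z) = ∫₀^{φ(z)} f(ξ) g'(ξ) dξ`. -/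
def genVolterra (g φ f : ℂ → ℂ) : ℂ → ℂ := fun z => volterra g f (φ z)

/-- An analytic selfmap of the unit disc. -/
def IsSelfMap (φ : ℂ → ℂ) : Prop :=
  DifferentiableOn ℂ φ uDisc ∧ Set.MapsTo φ uDisc uDisc

/-- `E`, embedded in `H(𝔻)` by `ι`, is (isometrically) the Banach space of analytic
functions with membership predicate `mem` and norm `nrm`. -/
def RealizesSpace {E : Type} [NormedAddCommGroup E] [NormedSpace ℂ E]
    (ι : E →ₗ[ℂ] (ℂ → ℂ)) (mem : (ℂ → ℂ) → Prop) (nrm : (ℂ → ℂ) → ℝ) : Prop :=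
  (∀ x y : E, Set.EqOn (ι x) (ι y) uDisc → x = y) ∧
  (∀ x : E, mem (ι x)) ∧
  (∀ f : ℂ → ℂ, mem f → ∃ x : E, Set.EqOn (ι x) f uDisc) ∧
  (∀ x : E, ‖x‖ = nrm (ι x))

/-- The weak topology of a normed space. -/
def wkTop (Y : Type) [NormedAddCommGroup Y] [NormedSpace ℂ Y] : TopologicalSpace Y :=
  TopologicalSpace.induced (fun y : Y => (fun ℓ : Y →L[ℂ] ℂ => ℓ y)) Pi.topologicalSpace

/-- A map between normed spaces is weakly compact if the image of the closed unit ball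
is relatively compact in the weak topology. -/
def WeaklyCompactOn {X Y : Type} [NormedAddCommGroup X] [NormedAddCommGroup Y]
    [NormedSpace ℂ Y] (T : X → Y) : Prop :=
  @IsCompact Y (wkTop Y) (@closure Y (wkTop Y) (T '' Metric.closedBall (0 : X) 1))

/-- The essential norm of a bounded operator: the distance to the compact operators. -/
def essNorm {X Y : Type} [NormedAddCommGroup X] [NormedSpace ℂ X]
    [NormedAddCommGroup Y] [NormedSpace ℂ Y] (T : X →L[ℂ] Y) : ℝ :=
  sInf {c : ℝ | ∃ K : X →L[ℂ] Y, IsCompactOperator (fun x : X => K x) ∧ c = ‖T - K‖}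

/-- `limsup_{|φ(z)| → 1} F(z)` (with the convention that it is `0` when `sup |φ| < 1`). -/
def limsupAtBd (φ : ℂ → ℂ) (F : ℂ → ℝ) : ℝ :=
  sInf {M : ℝ | ∃ s : ℝ, 0 ≤ s ∧ s < 1 ∧ ∀ z ∈ uDisc, s < ‖φ z‖ → F z ≤ M}

/-- The set of integral means defining the Hardy norm. -/
def hpSet (p : ℝ) (f : ℂ → ℂ) : Set ℝ :=
  (fun r : ℝ => (2 * Real.pi)⁻¹ *
      ∫ θ in (0:ℝ)..(2 * Real.pi),
        ‖f ((r : ℂ) * Complex.exp ((θ : ℂ) * Complex.I))‖ ^ p) '' Set.Ico (0:ℝ) 1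

/-- The Hardy space norm. -/
def hpNorm (p : ℝ) (f : ℂ → ℂ) : ℝ := sSup (hpSet p f) ^ (1 / p)

/-- Membership in the Hardy space `H^p`. -/
def memHp (p : ℝ) (f : ℂ → ℂ) : Prop :=
  DifferentiableOn ℂ f uDisc ∧ BddAbove (hpSet p f)

/-- The Bergman integrand `|f(z)|^p (1-|z|²)^α`. -/
def bergFun (p α : ℝ) (f : ℂ → ℂ) : ℂ → ℝ :=
  fun z => ‖f z‖ ^ p * (1 - ‖z‖ ^ 2) ^ α

/-- The weighted Bergman space norm (with respect to normalized area measure). -/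
def bergNorm (p α : ℝ) (f : ℂ → ℂ) : ℝ :=
  (Real.pi⁻¹ * ∫ z in uDisc, bergFun p α f z) ^ (1 / p)

/-- Membership in the weighted Bergman space `A_α^p`. -/
def memBerg (p α : ℝ) (f : ℂ → ℂ) : Prop :=
  DifferentiableOn ℂ f uDisc ∧ MeasureTheory.IntegrableOn (bergFun p α f) uDisc

/-- The associated weight `ṽ` of a weight `v`. -/
def assocWeight (v : ℂ → ℝ) (z : ℂ) : ℝ :=
  (sSup ((fun f : ℂ → ℂ => ‖f z‖) ''
    {f : ℂ → ℂ | DifferentiableOn ℂ f uDisc ∧ ∀ w ∈ uDisc, v w * ‖f w‖ ≤ 1}))⁻¹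

/-- The space `H(𝔻)` of holomorphic functions on the disc, with the compact-open
topology. -/
def HolD : Type := {f : ℂ → ℂ // DifferentiableOn ℂ f uDisc}

instance : TopologicalSpace HolD :=
  TopologicalSpace.induced (fun f : HolD => toCO f.1) inferInstance

instance : Fact ((1 : ENNReal) ≤ ⊤) := ⟨le_top⟩

/-- The sequence space `ℓ^∞`. -/
abbrev ellInf : Type := lp (fun _ : ℕ => ℂ) ⊤


lemma isOpen_uDisc : IsOpen uDisc := isOpen_ball

lemma zero_mem_uDisc : (0:ℂ) ∈ uDisc := by simp [uDisc]

lemma mem_uDisc_iff {z : ℂ} : z ∈ uDisc ↔ ‖z‖ < 1 := by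
  simp [uDisc, Metric.mem_ball, Complex.dist_eq]

lemma mul_mem_uDisc {a z : ℂ} (ha : ‖a‖ ≤ 1) (hz : z ∈ uDisc) :
    a * z ∈ uDisc := by
  rw [mem_uDisc_iff] at *
  rw [norm_mul]
  nlinarith [norm_nonneg a, norm_nonneg z]

lemma seg_mem_uDisc {z : ℂ} (hz : z ∈ uDisc) {t : ℝ} (ht0 : 0 ≤ t) (ht1 : t ≤ 1) :
    (t:ℂ) * z ∈ uDisc :=
  mul_mem_uDisc (by rw [Complex.norm_real, Real.norm_eq_abs]; rwa [_root_.abs_of_nonneg ht0]) hz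

lemma derivDiffOn {f : ℂ → ℂ} (hf : DifferentiableOn ℂ f uDisc) :
    DifferentiableOn ℂ (deriv f) uDisc :=
  ((hf.analyticOnNhd isOpen_uDisc).deriv).differentiableOn

lemma contOn_seg {f : ℂ → ℂ} (hf : ContinuousOn f uDisc) {w : ℂ} (hw : w ∈ uDisc) :
    ContinuousOn (fun t : ℝ => f ((t:ℂ) * w)) (Set.Icc 0 1) :=
  hf.comp (by fun_prop) (fun t ht => seg_mem_uDisc hw ht.1 ht.2)

lemma deriv_eqOn_uDisc {f₁ f₂ : ℂ → ℂ} (h : Set.EqOn f₁ f₂ uDisc) {z : ℂ} (hz : z ∈ uDisc) :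
    deriv f₁ z = deriv f₂ z :=
  Filter.EventuallyEq.deriv_eq (Filter.eventuallyEq_of_mem (isOpen_uDisc.mem_nhds hz) h)

-- FTC along segment
lemma ftc_seg {f : ℂ → ℂ} (hf : DifferentiableOn ℂ f uDisc) {z : ℂ} (hz : z ∈ uDisc) :
    f z = f 0 + z * ∫ t in (0:ℝ)..1, deriv f ((t:ℂ) * z) := by
  have hcont : ContinuousOn (fun t : ℝ => deriv f ((t:ℂ) * z)) (Set.Icc 0 1) :=
    contOn_seg (derivDiffOn hf).continuousOn hz
  have hderiv : ∀ t ∈ Set.uIcc (0:ℝ) 1,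
      HasDerivAt (fun t : ℝ => f ((t:ℂ) * z)) (deriv f ((t:ℂ) * z) * z) t := by
    intro t ht
    rw [Set.uIcc_of_le zero_le_one] at ht
    have hmem : (t:ℂ) * z ∈ uDisc := seg_mem_uDisc hz ht.1 ht.2
    have h1 : HasDerivAt f (deriv f ((t:ℂ) * z)) ((t:ℂ) * z) :=
      (hf.differentiableAt (isOpen_uDisc.mem_nhds hmem)).hasDerivAt
    have h2 : HasDerivAt (fun w : ℂ => w * z) z ((t:ℂ)) := by
      simpa using (hasDerivAt_id ((t:ℂ))).mul_const z
    have h3 := (h1.comp ((t:ℂ)) h2).comp_ofReal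
    simpa using h3
  have hint : IntervalIntegrable (fun t : ℝ => deriv f ((t:ℂ) * z) * z) MeasureTheory.volume 0 1 := by
    apply ContinuousOn.intervalIntegrable
    rw [Set.uIcc_of_le zero_le_one]
    exact hcont.mul continuousOn_const
  have := intervalIntegral.integral_eq_sub_of_hasDerivAt hderiv hint
  rw [intervalIntegral.integral_mul_const] at this
  simp only [Complex.ofReal_one, Complex.ofReal_zero, one_mul, zero_mul] at this
  rw [mul_comm]
  rw [this]
  ring

-- primitive of a holomorphic function on the disc
lemma hasDerivAt_primitive {F : ℂ → ℂ} (hF : DifferentiableOn ℂ F uDisc)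
    {w : ℂ} (hw : w ∈ uDisc) :
    HasDerivAt (fun w => w * ∫ t in (0:ℝ)..1, F ((t:ℂ) * w)) (F w) w := by
  have hw1 : ‖w‖ < 1 := mem_uDisc_iff.mp hw
  set ρ : ℝ := (1 + ‖w‖) / 2 with hρ
  have hρ1 : ρ < 1 := by rw [hρ]; linarith
  have hρw : ‖w‖ < ρ := by rw [hρ]; nlinarith [norm_nonneg w]
  have hρ0 : 0 < ρ := lt_of_le_of_lt (norm_nonneg w) hρw
  have hBsub : Metric.closedBall (0:ℂ) ρ ⊆ uDisc := by
    intro u hu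
    rw [Metric.mem_closedBall, Complex.dist_eq, sub_zero] at hu
    exact mem_uDisc_iff.mpr (lt_of_le_of_lt hu hρ1)
  have hcompact : IsCompact (Metric.closedBall (0:ℂ) ρ) := isCompact_closedBall _ _
  obtain ⟨C₁, hC₁⟩ := hcompact.exists_bound_of_continuousOn (hF.continuousOn.mono hBsub)
  obtain ⟨C₂, hC₂⟩ := hcompact.exists_bound_of_continuousOn
    ((derivDiffOn hF).continuousOn.mono hBsub)
  have hC₂0 : 0 ≤ C₂ := le_trans (norm_nonneg _) (hC₂ 0 (by simp [Metric.mem_closedBall, hρ0.le]))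
  set ε : ℝ := ρ - ‖w‖ with hε
  have hε0 : 0 < ε := by rw [hε]; linarith
  -- membership helper
  have hmem : ∀ x ∈ Metric.ball w ε, ∀ t ∈ Set.Icc (0:ℝ) 1,
      (t:ℂ) * x ∈ Metric.closedBall (0:ℂ) ρ := by
    intro x hx t ht
    rw [Metric.mem_ball, Complex.dist_eq] at hx
    have hxρ : ‖x‖ < ρ := by
      calc ‖x‖ ≤ ‖x - w‖ + ‖w‖ := by
            simpa using norm_add_le (x - w) w
        _ < ε + ‖w‖ := by linarith
        _ = ρ := by rw [hε]; ring
    rw [Metric.mem_closedBall, Complex.dist_eq, sub_zero, norm_mul, Complex.norm_real, Real.norm_eq_abs,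
      _root_.abs_of_nonneg ht.1]
    nlinarith [norm_nonneg x, ht.1, ht.2]
  have key := intervalIntegral.hasDerivAt_integral_of_dominated_loc_of_deriv_le
    (𝕜 := ℂ) (μ := MeasureTheory.volume) (a := (0:ℝ)) (b := 1)
    (F := fun x t => x * F ((t:ℂ) * x))
    (F' := fun x t => F ((t:ℂ) * x) + x * (deriv F ((t:ℂ) * x) * (t:ℂ)))
    (x₀ := w) (bound := fun _ => C₁ + C₂) (Metric.ball_mem_nhds w hε0)
    ?hmeas ?hint ?hmeas' ?hbound ?hbint ?hdiff
  · obtain ⟨-, hkey⟩ := key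
    have hfun : (fun x : ℂ => x * ∫ t in (0:ℝ)..1, F ((t:ℂ) * x))
        = fun x : ℂ => ∫ t in (0:ℝ)..1, x * F ((t:ℂ) * x) := by
      funext x
      rw [intervalIntegral.integral_const_mul]
    rw [hfun]
    refine hkey.congr_deriv ?_
    -- ∫ (F(tw) + w * (F'(tw) t)) dt = F w
    have hψ : ∀ t ∈ Set.uIcc (0:ℝ) 1,
        HasDerivAt (fun t : ℝ => (t:ℂ) * F ((t:ℂ) * w))
          (F ((t:ℂ) * w) + w * (deriv F ((t:ℂ) * w) * (t:ℂ))) t := by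
      intro t ht
      rw [Set.uIcc_of_le zero_le_one] at ht
      have hmemt : (t:ℂ) * w ∈ uDisc := seg_mem_uDisc hw ht.1 ht.2
      have h1 : HasDerivAt F (deriv F ((t:ℂ) * w)) ((t:ℂ) * w) :=
        (hF.differentiableAt (isOpen_uDisc.mem_nhds hmemt)).hasDerivAt
      have h2 : HasDerivAt (fun u : ℂ => u * w) w ((t:ℂ)) := by
        simpa using (hasDerivAt_id ((t:ℂ))).mul_const w
      have h3 : HasDerivAt (fun u : ℂ => u * F (u * w))
          (1 * F ((t:ℂ) * w) + (t:ℂ) * (deriv F ((t:ℂ) * w) * w)) ((t:ℂ)) :=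
        (hasDerivAt_id ((t:ℂ))).mul (h1.comp ((t:ℂ)) h2)
      have h4 := h3.comp_ofReal
      have : (1 : ℂ) * F ((t:ℂ) * w) + (t:ℂ) * (deriv F ((t:ℂ) * w) * w)
          = F ((t:ℂ) * w) + w * (deriv F ((t:ℂ) * w) * (t:ℂ)) := by ring
      rw [this] at h4
      exact h4
    have hintψ : IntervalIntegrable
        (fun t : ℝ => F ((t:ℂ) * w) + w * (deriv F ((t:ℂ) * w) * (t:ℂ)))
        MeasureTheory.volume 0 1 := by
      apply ContinuousOn.intervalIntegrable
      rw [Set.uIcc_of_le zero_le_one]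
      exact (contOn_seg hF.continuousOn hw).add
        (continuousOn_const.mul ((contOn_seg (derivDiffOn hF).continuousOn hw).mul
          (by fun_prop)))
    have := intervalIntegral.integral_eq_sub_of_hasDerivAt hψ hintψ
    rw [this]
    simp
  case hmeas =>
    filter_upwards [Metric.ball_mem_nhds w hε0] with x hx
    apply ContinuousOn.aestronglyMeasurable _ measurableSet_uIoc
    rw [Set.uIoc_of_le zero_le_one]
    have : ContinuousOn (fun t : ℝ => x * F ((t:ℂ) * x)) (Set.Icc 0 1) := by
      apply continuousOn_const.mul
      exact hF.continuousOn.comp (by fun_prop)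
        (fun t ht => hBsub (hmem x hx t ht))
    exact this.mono Set.Ioc_subset_Icc_self
  case hint =>
    apply ContinuousOn.intervalIntegrable
    rw [Set.uIcc_of_le zero_le_one]
    exact continuousOn_const.mul (contOn_seg hF.continuousOn hw)
  case hmeas' =>
    apply ContinuousOn.aestronglyMeasurable _ measurableSet_uIoc
    rw [Set.uIoc_of_le zero_le_one]
    refine ContinuousOn.mono ?_ Set.Ioc_subset_Icc_self
    exact (contOn_seg hF.continuousOn hw).add
      (continuousOn_const.mul ((contOn_seg (derivDiffOn hF).continuousOn hw).mul (by fun_prop)))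
  case hbound =>
    apply MeasureTheory.ae_of_all
    intro t ht x hx
    rw [Set.uIoc_of_le zero_le_one] at ht
    have htIcc : t ∈ Set.Icc (0:ℝ) 1 := Set.Ioc_subset_Icc_self ht
    have hmemtx := hmem x hx t htIcc
    have hb1 : ‖F ((t:ℂ) * x)‖ ≤ C₁ := hC₁ _ hmemtx
    have hb2 : ‖deriv F ((t:ℂ) * x)‖ ≤ C₂ := hC₂ _ hmemtx
    have hx1 : ‖x‖ ≤ 1 := by
      have := Metric.mem_closedBall.mp (hmem x hx 1 (by norm_num))
      rw [Complex.dist_eq, sub_zero] at this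
      simpa using le_trans (by simpa using this) hρ1.le
    calc ‖F ((t:ℂ) * x) + x * (deriv F ((t:ℂ) * x) * (t:ℂ))‖
        ≤ ‖F ((t:ℂ) * x)‖ + ‖x * (deriv F ((t:ℂ) * x) * (t:ℂ))‖ :=
          norm_add_le _ _
      _ ≤ C₁ + C₂ := by
          rw [norm_mul, norm_mul, Complex.norm_real, Real.norm_eq_abs, _root_.abs_of_nonneg htIcc.1]
          have : ‖x‖ * (‖deriv F ((t:ℂ) * x)‖ * t) ≤ C₂ := by
            calc ‖x‖ * (‖deriv F ((t:ℂ) * x)‖ * t)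
                ≤ 1 * (‖deriv F ((t:ℂ) * x)‖ * t) := by
                  apply mul_le_mul_of_nonneg_right hx1
                  exact mul_nonneg (norm_nonneg _) htIcc.1
              _ = ‖deriv F ((t:ℂ) * x)‖ * t := one_mul _
              _ ≤ C₂ * 1 := mul_le_mul hb2 htIcc.2 htIcc.1 hC₂0
              _ = C₂ := mul_one _
          linarith
  case hbint => exact intervalIntegrable_const
  case hdiff =>
    apply MeasureTheory.ae_of_all
    intro t ht x hx
    rw [Set.uIoc_of_le zero_le_one] at ht
    have htIcc : t ∈ Set.Icc (0:ℝ) 1 := Set.Ioc_subset_Icc_self ht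
    have hmemtx : (t:ℂ) * x ∈ uDisc := hBsub (hmem x hx t htIcc)
    have h1 : HasDerivAt F (deriv F ((t:ℂ) * x)) ((t:ℂ) * x) :=
      (hF.differentiableAt (isOpen_uDisc.mem_nhds hmemtx)).hasDerivAt
    have h2 : HasDerivAt (fun u : ℂ => (t:ℂ) * u) ((t:ℂ)) x := by
      simpa using (hasDerivAt_id x).const_mul ((t:ℂ))
    have h3 : HasDerivAt (fun u : ℂ => u * F ((t:ℂ) * u))
        (1 * F ((t:ℂ) * x) + x * (deriv F ((t:ℂ) * x) * (t:ℂ))) x :=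
      (hasDerivAt_id x).mul (h1.comp x h2)
    simpa using h3

lemma volterra_hasDerivAt {g f : ℂ → ℂ} (hg : DifferentiableOn ℂ g uDisc)
    (hf : DifferentiableOn ℂ f uDisc) {w : ℂ} (hw : w ∈ uDisc) :
    HasDerivAt (volterra g f) (f w * deriv g w) w := by
  have := hasDerivAt_primitive (F := fun ξ => f ξ * deriv g ξ) (hf.mul (derivDiffOn hg)) hw
  exact this

lemma genVolterra_hasDerivAt {g φ f : ℂ → ℂ} (hg : DifferentiableOn ℂ g uDisc)
    (hφ : IsSelfMap φ) (hf : DifferentiableOn ℂ f uDisc) {z : ℂ} (hz : z ∈ uDisc) :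
    HasDerivAt (genVolterra g φ f) (f (φ z) * deriv g (φ z) * deriv φ z) z := by
  have h1 := volterra_hasDerivAt hg hf (hφ.2 hz)
  have h2 : HasDerivAt φ (deriv φ z) z :=
    (hφ.1.differentiableAt (isOpen_uDisc.mem_nhds hz)).hasDerivAt
  exact h1.comp z h2

lemma comp_hasDerivAt {g φ : ℂ → ℂ} (hg : DifferentiableOn ℂ g uDisc)
    (hφ : IsSelfMap φ) {z : ℂ} (hz : z ∈ uDisc) :
    HasDerivAt (fun z => g (φ z)) (deriv g (φ z) * deriv φ z) z := by
  have h1 : HasDerivAt g (deriv g (φ z)) (φ z) :=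
    (hg.differentiableAt (isOpen_uDisc.mem_nhds (hφ.2 hz))).hasDerivAt
  have h2 : HasDerivAt φ (deriv φ z) z :=
    (hφ.1.differentiableAt (isOpen_uDisc.mem_nhds hz)).hasDerivAt
  exact h1.comp z h2

lemma genVolterra_diffOn {g φ f : ℂ → ℂ} (hg : DifferentiableOn ℂ g uDisc)
    (hφ : IsSelfMap φ) (hf : DifferentiableOn ℂ f uDisc) :
    DifferentiableOn ℂ (genVolterra g φ f) uDisc := fun z hz =>
  ((genVolterra_hasDerivAt hg hφ hf hz).differentiableAt).differentiableWithinAt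

lemma deriv_genVolterra {g φ f : ℂ → ℂ} (hg : DifferentiableOn ℂ g uDisc)
    (hφ : IsSelfMap φ) (hf : DifferentiableOn ℂ f uDisc) {z : ℂ} (hz : z ∈ uDisc) :
    deriv (genVolterra g φ f) z = f (φ z) * deriv (fun z => g (φ z)) z := by
  rw [(genVolterra_hasDerivAt hg hφ hf hz).deriv, (comp_hasDerivAt hg hφ hz).deriv]
  ring

-- congruence lemmas
lemma bvSet_congr {v : ℂ → ℝ} {f₁ f₂ : ℂ → ℂ} (h : Set.EqOn f₁ f₂ uDisc) :
    bvSet v f₁ = bvSet v f₂ :=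
  Set.image_congr (fun z hz => by rw [deriv_eqOn_uDisc h hz])

lemma bvNorm_congr {v : ℂ → ℝ} {f₁ f₂ : ℂ → ℂ} (h : Set.EqOn f₁ f₂ uDisc) :
    bvNorm v f₁ = bvNorm v f₂ := by
  unfold bvNorm
  rw [bvSet_congr h, h zero_mem_uDisc]

lemma memBv0_congr {v : ℂ → ℝ} {f₁ f₂ : ℂ → ℂ} (h : Set.EqOn f₁ f₂ uDisc)
    (hf₂ : DifferentiableOn ℂ f₂ uDisc) (hm : memBv0 v f₁) : memBv0 v f₂ := by
  refine ⟨⟨hf₂, ?_⟩, ?_⟩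
  · rw [← bvSet_congr h]; exact hm.1.2
  · intro ε hε
    obtain ⟨s, hs0, hs1, hs⟩ := hm.2 ε hε
    exact ⟨s, hs0, hs1, fun z hz hsz => by
      have := hs z hz hsz
      simpa only [deriv_eqOn_uDisc h hz] using this⟩

lemma memBv0_add_const {v : ℂ → ℝ} {f : ℂ → ℂ} (c : ℂ) (hm : memBv0 v f) :
    memBv0 v (fun z => f z + c) := by
  have hd : ∀ z : ℂ, deriv (fun z => f z + c) z = deriv f z := fun z => by
    simp [deriv_add_const]
  refine ⟨⟨hm.1.1.add_const c, ?_⟩, ?_⟩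
  · have : bvSet v (fun z => f z + c) = bvSet v f :=
      Set.image_congr (fun z _ => by rw [hd])
    rw [this]; exact hm.1.2
  · intro ε hε
    obtain ⟨s, hs0, hs1, hs⟩ := hm.2 ε hε
    exact ⟨s, hs0, hs1, fun z hz hsz => by
      have := hs z hz hsz
      simpa only [hd z] using this⟩

lemma vanishBd_of_le {F G : ℂ → ℝ} (hG : vanishBd G) {C : ℝ} (hC : 0 < C)
    (h : ∀ z ∈ uDisc, F z ≤ C * G z) : vanishBd F := by
  intro ε hε
  obtain ⟨s, hs0, hs1, hs⟩ := hG (ε / C) (by positivity)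
  refine ⟨s, hs0, hs1, fun z hz hsz => ?_⟩
  have := hs z hz hsz
  calc F z ≤ C * G z := h z hz
    _ < C * (ε / C) := by exact mul_lt_mul_of_pos_left this hC
    _ = ε := by field_simp

section EvalBounds

variable {E : Type} [NormedAddCommGroup E] [NormedSpace ℂ E] {ιE : E →ₗ[ℂ] (ℂ → ℂ)}
  {v : ℂ → ℝ}

lemma sSup_bvSet_nonneg (hv : IsWeight v) {f : ℂ → ℂ} (hb : BddAbove (bvSet v f)) :
    0 ≤ sSup (bvSet v f) := by
  have hmem : v 0 * ‖deriv f 0‖ ∈ bvSet v f :=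
    Set.mem_image_of_mem _ zero_mem_uDisc
  exact le_trans (mul_nonneg (hv.2.1 0 zero_mem_uDisc).le (norm_nonneg _))
    (le_csSup hb hmem)

lemma abs_apply_zero_le_norm (hv : IsWeight v)
    (hmem : ∀ e : E, memBvInf v (ιE e)) (hnorm : ∀ e : E, ‖e‖ = bvNorm v (ιE e))
    (e : E) : ‖ιE e 0‖ ≤ ‖e‖ := by
  rw [hnorm e, bvNorm]
  linarith [sSup_bvSet_nonneg hv (hmem e).2]

lemma weighted_deriv_le_norm (hv : IsWeight v)
    (hmem : ∀ e : E, memBvInf v (ιE e)) (hnorm : ∀ e : E, ‖e‖ = bvNorm v (ιE e))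
    (e : E) {z : ℂ} (hz : z ∈ uDisc) :
    v z * ‖deriv (ιE e) z‖ ≤ ‖e‖ := by
  rw [hnorm e, bvNorm]
  have h1 : v z * ‖deriv (ιE e) z‖ ∈ bvSet v (ιE e) :=
    Set.mem_image_of_mem _ hz
  have h2 := le_csSup (hmem e).2 h1
  have h3 : (0:ℝ) ≤ ‖ιE e 0‖ := norm_nonneg _
  linarith

lemma eval_bound (hv : IsWeight v)
    (hmem : ∀ e : E, memBvInf v (ιE e)) (hnorm : ∀ e : E, ‖e‖ = bvNorm v (ιE e))
    {z : ℂ} (hz : z ∈ uDisc) :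
    ∃ c : ℝ, 0 ≤ c ∧ ∀ e : E, ‖ιE e z‖ ≤ c * ‖e‖ := by
  -- minimum of v on the segment from 0 to z
  set K : Set ℂ := (fun t : ℝ => (t:ℂ) * z) '' Set.Icc 0 1 with hKdef
  have hKsub : K ⊆ uDisc := by
    rintro - ⟨t, ht, rfl⟩
    exact seg_mem_uDisc hz ht.1 ht.2
  have hKcomp : IsCompact K := (isCompact_Icc).image (by fun_prop)
  have hKne : K.Nonempty := ⟨z, ⟨1, by norm_num, by simp⟩⟩
  obtain ⟨w₀, hw₀K, hw₀min⟩ := hKcomp.exists_isMinOn hKne (hv.1.mono hKsub)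
  set m : ℝ := v w₀ with hm
  have hm0 : 0 < m := hv.2.1 w₀ (hKsub hw₀K)
  refine ⟨1 + 1 / m, by positivity, fun e => ?_⟩
  have hftc := ftc_seg (hmem e).1 hz
  have hbound : ∀ t ∈ Set.uIoc (0:ℝ) 1, ‖deriv (ιE e) ((t:ℂ) * z)‖ ≤ ‖e‖ / m := by
    intro t ht
    rw [Set.uIoc_of_le zero_le_one] at ht
    have htz : (t:ℂ) * z ∈ K := ⟨t, Set.Ioc_subset_Icc_self ht, rfl⟩
    have hvtz : m ≤ v ((t:ℂ) * z) := hw₀min htz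
    have h1 := weighted_deriv_le_norm hv hmem hnorm e (hKsub htz)
    rw [le_div_iff₀ hm0]
    nlinarith [norm_nonneg (deriv (ιE e) ((t:ℂ) * z))]
  have hInt : ‖∫ t in (0:ℝ)..1, deriv (ιE e) ((t:ℂ) * z)‖ ≤ ‖e‖ / m * |1 - 0| :=
    intervalIntegral.norm_integral_le_of_norm_le_const hbound
  norm_num at hInt
  have hz1 : ‖z‖ ≤ 1 := (mem_uDisc_iff.mp hz).le
  calc ‖ιE e z‖
      = ‖ιE e 0 + z * ∫ t in (0:ℝ)..1, deriv (ιE e) ((t:ℂ) * z)‖ := by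
        rw [← hftc]
    _ ≤ ‖ιE e 0‖
        + ‖z‖ * ‖∫ t in (0:ℝ)..1, deriv (ιE e) ((t:ℂ) * z)‖ := by
        rw [← norm_mul]
        exact norm_add_le _ _
    _ ≤ ‖e‖ + 1 * (‖e‖ / m) := by
        refine add_le_add (abs_apply_zero_le_norm hv hmem hnorm e) ?_
        refine mul_le_mul hz1 ?_ (norm_nonneg _) zero_le_one
        exact hInt
    _ = (1 + 1 / m) * ‖e‖ := by ring

end EvalBounds

open scoped Pointwise

set_option maxHeartbeats 2000000 in
/-- For `X ⊂ H(𝔻)` satisfying (I) and (IV) and any weight `v`: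
`T_g^φ` maps `X` into `B_v^0` compactly iff `T_g^φ : X → B_v^∞` is compact and
`g ∘ φ ∈ B_v^0`. -/
theorem genVolterra_compact_to_Bv0_iff
    {X E F : Type} [NormedAddCommGroup X] [NormedSpace ℂ X] [CompleteSpace X]
    [NormedAddCommGroup E] [NormedSpace ℂ E] [CompleteSpace E]
    [NormedAddCommGroup F] [NormedSpace ℂ F] [CompleteSpace F]
    (ιX : X →ₗ[ℂ] (ℂ → ℂ))
    (hXinj : ∀ x y : X, Set.EqOn (ιX x) (ιX y) uDisc → x = y)
    (hXhol : ∀ x : X, DifferentiableOn ℂ (ιX x) uDisc)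
    (hXconst : ∀ c : ℂ, ∃ x : X, Set.EqOn (ιX x) (fun _ => c) uDisc)
    (hI : CondI (fun x : X => ιX x)) (hIV : CondIV ιX)
    (v : ℂ → ℝ) (hv : IsWeight v)
    (ιE : E →ₗ[ℂ] (ℂ → ℂ)) (hE : RealizesSpace ιE (memBvInf v) (bvNorm v))
    (ιF : F →ₗ[ℂ] (ℂ → ℂ)) (hF : RealizesSpace ιF (memBv0 v) (bvNorm v))
    (g φ : ℂ → ℂ) (hg : DifferentiableOn ℂ g uDisc) (hφ : IsSelfMap φ) :
    (∃ T : X →L[ℂ] F, (∀ x : X, Set.EqOn (ιF (T x)) (genVolterra g φ (ιX x)) uDisc) ∧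
        IsCompactOperator (fun x : X => T x)) ↔
    ((∃ T : X →L[ℂ] E, (∀ x : X, Set.EqOn (ιE (T x)) (genVolterra g φ (ιX x)) uDisc) ∧
        IsCompactOperator (fun x : X => T x)) ∧
      memBv0 v (fun z => g (φ z))) := by
  obtain ⟨hEinj, hEmem, hEsurj, hEnorm⟩ := hE
  obtain ⟨hFinj, hFmem, hFsurj, hFnorm⟩ := hF
  -- the isometric embedding J : F → E
  have hJex : ∀ y : F, ∃ e : E, Set.EqOn (ιE e) (ιF y) uDisc :=
    fun y => hEsurj _ (hFmem y).1
  choose J₀ hJ₀ using hJex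
  have hJadd : ∀ y y' : F, J₀ (y + y') = J₀ y + J₀ y' := by
    intro y y'
    apply hEinj
    intro z hz
    calc ιE (J₀ (y + y')) z = ιF (y + y') z := hJ₀ (y + y') hz
      _ = ιF y z + ιF y' z := by rw [map_add]; rfl
      _ = ιE (J₀ y) z + ιE (J₀ y') z := by rw [hJ₀ y hz, hJ₀ y' hz]
      _ = ιE (J₀ y + J₀ y') z := by rw [map_add]; rfl
  have hJsmul : ∀ (c : ℂ) (y : F), J₀ (c • y) = c • J₀ y := by
    intro c y
    apply hEinj
    intro z hz
    calc ιE (J₀ (c • y)) z = ιF (c • y) z := hJ₀ (c • y) hz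
      _ = c • ιF y z := by rw [_root_.map_smul]; rfl
      _ = c • ιE (J₀ y) z := by rw [hJ₀ y hz]
      _ = ιE (c • J₀ y) z := by rw [_root_.map_smul]; rfl
  have hJnorm : ∀ y : F, ‖J₀ y‖ = ‖y‖ := fun y => by
    rw [hEnorm, hFnorm, bvNorm_congr (hJ₀ y)]
  set Jlin : F →ₗ[ℂ] E :=
    { toFun := J₀, map_add' := hJadd, map_smul' := hJsmul } with hJlin
  set J : F →L[ℂ] E := Jlin.mkContinuous 1 (fun y => by
    rw [show Jlin y = J₀ y from rfl, hJnorm, one_mul]) with hJdef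
  have hJval : ∀ y : F, Set.EqOn (ιE (J y)) (ιF y) uDisc := fun y => hJ₀ y
  have hJnorm' : ∀ y : F, ‖J y‖ = ‖y‖ := fun y => hJnorm y
  constructor
  · rintro ⟨T, hT, hTc⟩
    refine ⟨⟨J.comp T, ?_, ?_⟩, ?_⟩
    · intro x z hz
      calc ιE ((J.comp T) x) z = ιF (T x) z := hJval (T x) hz
        _ = genVolterra g φ (ιX x) z := hT x hz
    · exact hTc.continuous_comp J.continuous
    · -- g ∘ φ belongs to B_v^0
      obtain ⟨x₁, hx₁⟩ := hXconst 1
      have hgφdiff : DifferentiableOn ℂ (fun z => g (φ z)) uDisc := hg.comp hφ.1 hφ.2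
      have heq : Set.EqOn (ιF (T x₁)) (fun z => g (φ z) - g 0) uDisc := by
        intro z hz
        have h2 : genVolterra g φ (ιX x₁) z
            = φ z * ∫ t in (0:ℝ)..1, deriv g ((t:ℂ) * φ z) := by
          show volterra g (ιX x₁) (φ z) = _
          unfold volterra
          congr 1
          apply intervalIntegral.integral_congr
          intro t ht
          rw [Set.uIcc_of_le zero_le_one] at ht
          have hmemt : (t:ℂ) * φ z ∈ uDisc := seg_mem_uDisc (hφ.2 hz) ht.1 ht.2
          simp [hx₁ hmemt]
        have h3 := ftc_seg hg (hφ.2 hz)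
        rw [hT x₁ hz, h2]
        simp only
        rw [h3]
        ring
      have hm1 : memBv0 v (fun z => g (φ z) - g 0) :=
        memBv0_congr heq (hgφdiff.sub (differentiableOn_const _)) (hFmem (T x₁))
      have hm2 := memBv0_add_const (g 0) hm1
      simpa using hm2
  · rintro ⟨⟨T, hT, hTc⟩, hgφ⟩
    obtain ⟨M, hM⟩ := hIV
    -- the dilation radii
    set r : ℕ → ℝ := fun n => 1 - 1 / (n + 2) with hrdef
    have hr0 : ∀ n : ℕ, 0 < r n := by
      intro n
      have h2 : (2:ℝ) ≤ (n:ℝ) + 2 := by linarith [Nat.cast_nonneg (α := ℝ) n]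
      have := one_div_le_one_div_of_le (by norm_num) h2
      simp only [hrdef]
      norm_num at this ⊢
      linarith
    have hr1 : ∀ n : ℕ, r n < 1 := by
      intro n
      have : (0:ℝ) < 1 / ((n:ℝ) + 2) := by positivity
      simp only [hrdef]
      linarith
    have hrtend : Filter.Tendsto r Filter.atTop (𝓝 1) := by
      have h1 : Filter.Tendsto (fun n : ℕ => (n:ℝ) + 2) Filter.atTop Filter.atTop :=
        Filter.tendsto_atTop_add_const_right _ 2 tendsto_natCast_atTop_atTop
      have h0 : Filter.Tendsto (fun n : ℕ => 1 / ((n:ℝ) + 2)) Filter.atTop (𝓝 0) := by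
        simpa [one_div, Function.comp_def] using tendsto_inv_atTop_zero.comp h1
      have := h0.const_sub 1
      simpa [hrdef] using this
    choose R hR hRnorm using fun n => hM (r n) (hr0 n) (hr1 n)
    have hM0 : 0 ≤ M := le_trans (norm_nonneg _) (hRnorm 0)
    -- the key vanishing property
    have key : ∀ x : X, vanishBd (fun z => v z * ‖deriv (ιE (T x)) z‖) := by
      intro x
      set xn : ℕ → X := fun n => R n x with hxn
      have hxnnorm : ∀ n, ‖xn n‖ ≤ M * ‖x‖ := fun n =>
        le_trans ((R n).le_opNorm x) (mul_le_mul_of_nonneg_right (hRnorm n) (norm_nonneg x))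
      -- each T (xn n) has vanishing weighted derivative
      have hvan : ∀ n, vanishBd (fun z => v z * ‖deriv (ιE (T (xn n))) z‖) := by
        intro n
        have hsub : Metric.closedBall (0:ℂ) (r n) ⊆ uDisc := by
          intro u hu
          rw [Metric.mem_closedBall, Complex.dist_eq, sub_zero] at hu
          exact mem_uDisc_iff.mpr (lt_of_le_of_lt hu (hr1 n))
        obtain ⟨C, hC⟩ := (isCompact_closedBall (0:ℂ) (r n)).exists_bound_of_continuousOn
          ((hXhol x).continuousOn.mono hsub)
        have hC0 : 0 ≤ C :=
          le_trans (norm_nonneg _) (hC 0 (by simp [Metric.mem_closedBall, (hr0 n).le]))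
        apply vanishBd_of_le hgφ.2 (C := C + 1) (by linarith)
        intro z hz
        have hφz := hφ.2 hz
        have hd1 : deriv (ιE (T (xn n))) z = deriv (genVolterra g φ (ιX (xn n))) z :=
          deriv_eqOn_uDisc (hT (xn n)) hz
        have hd2 := deriv_genVolterra hg hφ (hXhol (xn n)) hz
        have hd3 : ιX (xn n) (φ z) = ιX x (((r n : ℝ):ℂ) * φ z) := hR n x hφz
        have hmemr : (((r n : ℝ):ℂ)) * φ z ∈ Metric.closedBall (0:ℂ) (r n) := by
          rw [Metric.mem_closedBall, Complex.dist_eq, sub_zero, norm_mul, Complex.norm_real, Real.norm_eq_abs,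
            _root_.abs_of_nonneg (hr0 n).le]
          have h1 : ‖φ z‖ ≤ 1 := (mem_uDisc_iff.mp hφz).le
          nlinarith [(hr0 n).le]
        have hCb : ‖ιX x (((r n : ℝ):ℂ) * φ z)‖ ≤ C := hC _ hmemr
        rw [hd1, hd2, hd3, norm_mul]
        have hv0 := (hv.2.1 z hz).le
        have habs := norm_nonneg (deriv (fun z => g (φ z)) z)
        calc v z * (‖ιX x (((r n : ℝ):ℂ) * φ z)‖
              * ‖deriv (fun z => g (φ z)) z‖)
            = ‖ιX x (((r n : ℝ):ℂ) * φ z)‖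
              * (v z * ‖deriv (fun z => g (φ z)) z‖) := by ring
          _ ≤ (C + 1) * (v z * ‖deriv (fun z => g (φ z)) z‖) := by
              apply mul_le_mul_of_nonneg_right (by linarith)
              exact mul_nonneg hv0 habs
      -- extract a convergent subsequence of T (xn n)
      obtain ⟨K0, hK0, hK0nh⟩ := id hTc
      obtain ⟨δ, hδ0, hδ⟩ := Metric.mem_nhds_iff.mp hK0nh
      have hden : (0:ℝ) < M * ‖x‖ + 1 := by nlinarith [norm_nonneg x]
      set c : ℝ := δ / (2 * (M * ‖x‖ + 1)) with hc
      have hc0 : 0 < c := div_pos hδ0 (by linarith)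
      have hcC : ((c:ℝ):ℂ) ≠ 0 := by
        simp only [ne_eq, Complex.ofReal_eq_zero]
        exact hc0.ne'
      have hmemK : ∀ n, T (xn n) ∈ ((c:ℂ)⁻¹) • K0 := by
        intro n
        have hcmul : c * (M * ‖x‖ + 1) = δ / 2 := by
          rw [hc]; field_simp
        have h1 : ‖((c:ℝ):ℂ) • xn n‖ < δ := by
          rw [norm_smul, Complex.norm_real, Real.norm_eq_abs, _root_.abs_of_pos hc0]
          have h2 : c * ‖xn n‖ ≤ c * (M * ‖x‖) :=
            mul_le_mul_of_nonneg_left (hxnnorm n) hc0.le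
          nlinarith [hc0]
        have h2 : ((c:ℝ):ℂ) • xn n ∈ Metric.ball (0:X) δ := by
          rwa [Metric.mem_ball, dist_zero_right]
        have h3 : T (((c:ℝ):ℂ) • xn n) ∈ K0 := hδ h2
        rw [_root_.map_smul] at h3
        have h4 : T (xn n) = ((c:ℝ):ℂ)⁻¹ • (((c:ℝ):ℂ) • T (xn n)) :=
          (inv_smul_smul₀ hcC _).symm
        rw [h4]
        exact Set.smul_mem_smul_set h3
      have hK' : IsCompact (((c:ℂ)⁻¹ : ℂ) • K0) := hK0.smul _
      obtain ⟨a, haK, ψ, hψ, hatend⟩ := hK'.tendsto_subseq hmemK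
      -- identify the limit
      have haTx : a = T x := by
        apply hEinj
        intro z hz
        obtain ⟨cz, hcz0, hcz⟩ := eval_bound hv hEmem hEnorm hz
        have hnorm0 : Filter.Tendsto (fun k => ‖T (xn (ψ k)) - a‖) Filter.atTop (𝓝 0) :=
          tendsto_iff_norm_sub_tendsto_zero.mp hatend
        have hi : Filter.Tendsto (fun k => ιE (T (xn (ψ k))) z) Filter.atTop (𝓝 (ιE a z)) := by
          rw [tendsto_iff_norm_sub_tendsto_zero]
          apply squeeze_zero (fun k => norm_nonneg _) (g := fun k => cz * ‖T (xn (ψ k)) - a‖)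
          · intro k
            have h1 := hcz (T (xn (ψ k)) - a)
            have h2 : ιE (T (xn (ψ k))) z - ιE a z = ιE (T (xn (ψ k)) - a) z := by
              rw [map_sub]; rfl
            rw [h2]
            exact h1
          · simpa using hnorm0.const_mul cz
        have hii : Filter.Tendsto (fun k => ιE (T (xn (ψ k))) z) Filter.atTop
            (𝓝 (ιE (T x) z)) := by
          have hφz := hφ.2 hz
          have hval : ∀ n, ιE (T (xn n)) z
              = φ z * ∫ t in (0:ℝ)..1,
                  ιX x (((r n : ℝ):ℂ) * ((t:ℂ) * φ z)) * deriv g ((t:ℂ) * φ z) := by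
            intro n
            rw [hT (xn n) hz]
            show volterra g (ιX (xn n)) (φ z) = _
            unfold volterra
            congr 1
            apply intervalIntegral.integral_congr
            intro t ht
            rw [Set.uIcc_of_le zero_le_one] at ht
            have hmemt : (t:ℂ) * φ z ∈ uDisc := seg_mem_uDisc hφz ht.1 ht.2
            have h5 : ιX (xn n) ((t:ℂ) * φ z) = ιX x (((r n : ℝ):ℂ) * ((t:ℂ) * φ z)) := by
              have h6 := hR n x hmemt
              simpa only [dil] using h6
            simp only [h5]
          have hvalx : ιE (T x) z
              = φ z * ∫ t in (0:ℝ)..1, ιX x ((t:ℂ) * φ z) * deriv g ((t:ℂ) * φ z) := by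
            rw [hT x hz]; rfl
          simp only [hval]
          rw [hvalx]
          apply Filter.Tendsto.const_mul
          have hsub2 : Metric.closedBall (0:ℂ) (‖φ z‖) ⊆ uDisc := by
            intro u hu
            rw [Metric.mem_closedBall, Complex.dist_eq, sub_zero] at hu
            exact mem_uDisc_iff.mpr (lt_of_le_of_lt hu (mem_uDisc_iff.mp hφz))
          obtain ⟨C₁, hC₁⟩ :=
            (isCompact_closedBall (0:ℂ) (‖φ z‖)).exists_bound_of_continuousOn
              ((hXhol x).continuousOn.mono hsub2)
          obtain ⟨C₂, hC₂⟩ :=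
            (isCompact_closedBall (0:ℂ) (‖φ z‖)).exists_bound_of_continuousOn
              ((derivDiffOn hg).continuousOn.mono hsub2)
          have hC₁0 : 0 ≤ C₁ := le_trans (norm_nonneg _)
            (hC₁ 0 (by simp [Metric.mem_closedBall]))
          have hC₂0 : 0 ≤ C₂ := le_trans (norm_nonneg _)
            (hC₂ 0 (by simp [Metric.mem_closedBall]))
          have hmemball : ∀ n : ℕ, ∀ t ∈ Set.Icc (0:ℝ) 1,
              ((r n : ℝ):ℂ) * ((t:ℂ) * φ z) ∈ Metric.closedBall (0:ℂ) (‖φ z‖) := by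
            intro n t ht
            rw [Metric.mem_closedBall, Complex.dist_eq, sub_zero, norm_mul, norm_mul,
              Complex.norm_real, Real.norm_eq_abs, Complex.norm_real, Real.norm_eq_abs, _root_.abs_of_nonneg (hr0 n).le,
              _root_.abs_of_nonneg ht.1]
            have hA := norm_nonneg (φ z)
            have h1 : r n * (t * ‖φ z‖) ≤ 1 * (t * ‖φ z‖) :=
              mul_le_mul_of_nonneg_right (hr1 n).le (mul_nonneg ht.1 hA)
            have h2 : t * ‖φ z‖ ≤ 1 * ‖φ z‖ :=
              mul_le_mul_of_nonneg_right ht.2 hA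
            linarith
          have hmemseg : ∀ t ∈ Set.Icc (0:ℝ) 1,
              (t:ℂ) * φ z ∈ Metric.closedBall (0:ℂ) (‖φ z‖) := by
            intro t ht
            rw [Metric.mem_closedBall, Complex.dist_eq, sub_zero, norm_mul,
              Complex.norm_real, Real.norm_eq_abs, _root_.abs_of_nonneg ht.1]
            have hA := norm_nonneg (φ z)
            have h2 : t * ‖φ z‖ ≤ 1 * ‖φ z‖ :=
              mul_le_mul_of_nonneg_right ht.2 hA
            linarith
          have hDCT : Filter.Tendsto
              (fun n => ∫ t in (0:ℝ)..1,
                ιX x (((r n : ℝ):ℂ) * ((t:ℂ) * φ z)) * deriv g ((t:ℂ) * φ z))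
              Filter.atTop
              (𝓝 (∫ t in (0:ℝ)..1, ιX x ((t:ℂ) * φ z) * deriv g ((t:ℂ) * φ z))) := by
            apply intervalIntegral.tendsto_integral_filter_of_dominated_convergence
              (bound := fun _ => C₁ * C₂)
            · apply Filter.Eventually.of_forall
              intro n
              apply ContinuousOn.aestronglyMeasurable _ measurableSet_uIoc
              rw [Set.uIoc_of_le zero_le_one]
              refine ContinuousOn.mono ?_ Set.Ioc_subset_Icc_self
              apply ContinuousOn.mul
              · exact (hXhol x).continuousOn.comp (by fun_prop)
                  (fun t ht => hsub2 (hmemball n t ht))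
              · exact contOn_seg (derivDiffOn hg).continuousOn hφz
            · apply Filter.Eventually.of_forall
              intro n
              apply MeasureTheory.ae_of_all
              intro t ht
              rw [Set.uIoc_of_le zero_le_one] at ht
              have htIcc := Set.Ioc_subset_Icc_self ht
              rw [norm_mul]
              exact mul_le_mul (hC₁ _ (hmemball n t htIcc)) (hC₂ _ (hmemseg t htIcc))
                (norm_nonneg _) hC₁0
            · exact intervalIntegrable_const
            · apply MeasureTheory.ae_of_all
              intro t ht
              rw [Set.uIoc_of_le zero_le_one] at ht
              have htIcc := Set.Ioc_subset_Icc_self ht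
              have hmemt : (t:ℂ) * φ z ∈ uDisc := seg_mem_uDisc hφz htIcc.1 htIcc.2
              apply Filter.Tendsto.mul_const
              have hcontat : ContinuousAt (ιX x) ((t:ℂ) * φ z) :=
                ((hXhol x).differentiableAt (isOpen_uDisc.mem_nhds hmemt)).continuousAt
              have hrp : Filter.Tendsto (fun n => ((r n : ℝ):ℂ) * ((t:ℂ) * φ z))
                  Filter.atTop (𝓝 ((t:ℂ) * φ z)) := by
                have h6 : Filter.Tendsto (fun n => ((r n : ℝ):ℂ)) Filter.atTop (𝓝 (1:ℂ)) :=
                  (Complex.continuous_ofReal.tendsto 1).comp hrtend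
                have := h6.mul_const ((t:ℂ) * φ z)
                simpa using this
              exact hcontat.tendsto.comp hrp
          exact hDCT.comp hψ.tendsto_atTop
        exact tendsto_nhds_unique hi hii
      -- conclude the ε/2 argument
      intro ε hε
      have hnormtend : Filter.Tendsto (fun k => ‖T (xn (ψ k)) - T x‖) Filter.atTop (𝓝 0) := by
        have := tendsto_iff_norm_sub_tendsto_zero.mp hatend
        rwa [haTx] at this
      obtain ⟨k, hk⟩ := (hnormtend.eventually_lt_const (half_pos hε)).exists
      obtain ⟨s, hs0, hs1, hs⟩ := hvan (ψ k) (ε/2) (half_pos hε)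
      refine ⟨s, hs0, hs1, fun z hz hsz => ?_⟩
      set u : E := T x - T (xn (ψ k)) with hu
      have hdiff1 : DifferentiableAt ℂ (ιE (T (xn (ψ k)))) z :=
        (hEmem _).1.differentiableAt (isOpen_uDisc.mem_nhds hz)
      have hdiff2 : DifferentiableAt ℂ (ιE u) z :=
        (hEmem _).1.differentiableAt (isOpen_uDisc.mem_nhds hz)
      have hsum : ιE (T x) = fun w => ιE (T (xn (ψ k))) w + ιE u w := by
        have : T x = T (xn (ψ k)) + u := by rw [hu]; abel
        rw [this, map_add]; rfl
      have hderiv : deriv (ιE (T x)) z = deriv (ιE (T (xn (ψ k)))) z + deriv (ιE u) z := by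
        rw [hsum]
        exact deriv_add hdiff1 hdiff2
      have hv0 := (hv.2.1 z hz).le
      have h7 : v z * ‖deriv (ιE u) z‖ ≤ ‖u‖ :=
        weighted_deriv_le_norm hv hEmem hEnorm u hz
      have h8 : ‖u‖ < ε / 2 := by rw [hu, norm_sub_rev]; exact hk
      have h9 := hs z hz hsz
      simp only at h9 ⊢
      calc v z * ‖deriv (ιE (T x)) z‖
          ≤ v z * (‖deriv (ιE (T (xn (ψ k)))) z‖ + ‖deriv (ιE u) z‖) := by
            rw [hderiv]
            exact mul_le_mul_of_nonneg_left (norm_add_le _ _) hv0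
        _ = v z * ‖deriv (ιE (T (xn (ψ k)))) z‖
            + v z * ‖deriv (ιE u) z‖ := by ring
        _ < ε / 2 + ε / 2 := by
            apply add_lt_add_of_lt_of_le h9
            linarith
        _ = ε := by ring
    -- build the operator into B_v^0
    have hmemT : ∀ x : X, memBv0 v (ιE (T x)) := fun x => ⟨hEmem (T x), key x⟩
    choose T'₀ hT'₀ using fun x => hFsurj (ιE (T x)) (hmemT x)
    have hadd : ∀ x y : X, T'₀ (x + y) = T'₀ x + T'₀ y := by
      intro x y
      apply hFinj
      intro z hz
      calc ιF (T'₀ (x + y)) z = ιE (T (x + y)) z := hT'₀ _ hz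
        _ = ιE (T x) z + ιE (T y) z := by rw [map_add, map_add]; rfl
        _ = ιF (T'₀ x) z + ιF (T'₀ y) z := by rw [hT'₀ x hz, hT'₀ y hz]
        _ = ιF (T'₀ x + T'₀ y) z := by rw [map_add]; rfl
    have hsmul : ∀ (d : ℂ) (x : X), T'₀ (d • x) = d • T'₀ x := by
      intro d x
      apply hFinj
      intro z hz
      calc ιF (T'₀ (d • x)) z = ιE (T (d • x)) z := hT'₀ _ hz
        _ = d • ιE (T x) z := by rw [_root_.map_smul, _root_.map_smul]; rfl
        _ = d • ιF (T'₀ x) z := by rw [hT'₀ x hz]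
        _ = ιF (d • T'₀ x) z := by rw [_root_.map_smul]; rfl
    set T'lin : X →ₗ[ℂ] F :=
      { toFun := T'₀, map_add' := hadd, map_smul' := hsmul } with hT'lin
    have hT'norm : ∀ x : X, ‖T'₀ x‖ = ‖T x‖ := fun x => by
      rw [hFnorm, hEnorm, bvNorm_congr (hT'₀ x)]
    set T' : X →L[ℂ] F := T'lin.mkContinuous ‖T‖ (fun x => by
      rw [show T'lin x = T'₀ x from rfl, hT'norm]
      exact T.le_opNorm x) with hT'def
    refine ⟨T', ?_, ?_⟩
    · intro x z hz
      calc ιF (T' x) z = ιE (T x) z := hT'₀ x hz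
        _ = genVolterra g φ (ιX x) z := hT x hz
    · have hJT : ∀ x : X, J (T' x) = T x := by
        intro x
        apply hEinj
        intro z hz
        calc ιE (J (T' x)) z = ιF (T' x) z := hJval _ hz
          _ = ιE (T x) z := hT'₀ x hz
      have hJiso : Isometry (⇑J) := AddMonoidHomClass.isometry_of_norm J hJnorm'
      obtain ⟨K, hK, hKnh⟩ := hTc
      refine ⟨(⇑J) ⁻¹' K, (hJiso.isClosedEmbedding).isCompact_preimage hK, ?_⟩
      have hpre : (fun x => T' x) ⁻¹' ((⇑J) ⁻¹' K) = (fun x => T x) ⁻¹' K := by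
        ext x
        simp [hJT x]
      rwa [hpre]
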